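/- Let K be an algebraically closed field of characteristic 0 and g > 1 an integer. Then for every subset J ⊆ M(2g+1), the sum ∑_{ε ∈ J} 1/(ε − 1) is not equal to −(2g+1)/2. -/

import Mathlib

open Polynomial Finset

/-- `Mset K n` is the set of `n`-th roots of unity in `K` other than `1`. -/
noncomputable def Mset (K : Type*) [Field K] (n : ℕ) : Finset K :=
  open scoped Classical in
  (Polynomial.nthRootsFinset n (1 : K)).filter (· ≠ 1)

lemma Mset_prod (K : Type*) [Field K] [IsAlgClosed K] [CharZero K] (n : ℕ) (hn : 1 < n) :
    ∏ ε ∈ Mset K n, (1 - ε) = (n : K) := by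
  classical
  have hpos : 0 < n := by omega
  obtain ⟨ζ, hζ⟩ : ∃ ζ : K, IsPrimitiveRoot ζ n := by
    have : NeZero (n : K) := ⟨by exact_mod_cast hpos.ne'⟩
    obtain ⟨μ, hμ⟩ := IsAlgClosed.exists_root (cyclotomic n K)
      (degree_cyclotomic_pos n K hpos).ne'
    exact ⟨μ, (isRoot_cyclotomic_iff).mp hμ⟩
  have h1 : (X : K[X]) ^ n - 1 = ∏ ε ∈ nthRootsFinset n (1 : K), (X - C ε) :=
    X_pow_sub_one_eq_prod hpos hζ
  have hM : Mset K n = (nthRootsFinset n (1 : K)).erase 1 := by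
    rw [Mset, Finset.filter_ne']
  have h1mem : (1 : K) ∈ nthRootsFinset n (1 : K) := one_mem_nthRootsFinset hpos
  have h2 : (X : K[X]) ^ n - 1 = (X - 1) * ∏ ε ∈ Mset K n, (X - C ε) := by
    rw [h1, hM, ← Finset.mul_prod_erase _ _ h1mem, map_one]
  have h4 : (∑ i ∈ range n, (X:K[X]) ^ i) = ∏ ε ∈ Mset K n, (X - C ε) := by
    have hne : (X - 1 : K[X]) ≠ 0 := X_sub_C_ne_zero 1
    apply mul_right_cancel₀ hne
    rw [geom_sum_mul, h2]; ring
  have := congrArg (Polynomial.eval 1) h4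
  simpa [eval_prod] using this.symm

theorem stmt_11 (K : Type*) [Field K] [IsAlgClosed K] [CharZero K]
    (g : ℕ) (hg : 1 < g) :
    ∀ J ⊆ Mset K (2 * g + 1),
      ∑ ε ∈ J, (ε - 1)⁻¹ ≠ -(((2 * g + 1 : ℕ) : K) / 2) := by
  classical
  intro J hJ h
  set n : ℕ := 2 * g + 1 with hn
  have hn1 : 1 < n := by omega
  have hprod := Mset_prod K n hn1
  -- each element of Mset is integral over ℤ
  have hintroot : ∀ ε ∈ Mset K n, IsIntegral ℤ ε := by
    intro ε hε
    rw [Mset, Finset.mem_filter] at hε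
    have hpow : ε ^ n = 1 := ((Polynomial.mem_nthRootsFinset (by omega) (1 : K)).mp hε.1)
    refine ⟨X ^ n - 1, ?_, ?_⟩
    · have : (1 : ℤ[X]) = C 1 := by simp
      rw [this]
      exact monic_X_pow_sub_C 1 (by omega)
    · simp [hpow]
  -- n * (ε - 1)⁻¹ is integral for ε ∈ J
  have hterm : ∀ ε ∈ J, IsIntegral ℤ ((n : K) * (ε - 1)⁻¹) := by
    intro ε hε
    have hεM := hJ hε
    have hεne : ε ≠ 1 := by
      rw [Mset, Finset.mem_filter] at hεM; exact hεM.2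
    have hsub : (1 : K) - ε ≠ 0 := sub_ne_zero.mpr (Ne.symm hεne)
    have hsplit : (n : K) = (1 - ε) * ∏ ε' ∈ (Mset K n).erase ε, (1 - ε') := by
      rw [← hprod, Finset.mul_prod_erase _ _ hεM]
    have heq : (n : K) * (ε - 1)⁻¹ = -∏ ε' ∈ (Mset K n).erase ε, (1 - ε') := by
      rw [hsplit, show (ε - 1 : K) = -(1 - ε) by ring, inv_neg, mul_neg, neg_inj,
        mul_right_comm, mul_inv_cancel₀ hsub, one_mul]
    rw [heq]
    refine IsIntegral.neg ?_
    refine IsIntegral.prod _ fun ε' hε' => ?_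
    exact isIntegral_one.sub (hintroot ε' (Finset.mem_of_mem_erase hε'))
  -- so n * sum is integral
  have hsumint : IsIntegral ℤ ((n : K) * ∑ ε ∈ J, (ε - 1)⁻¹) := by
    rw [Finset.mul_sum]
    exact IsIntegral.sum _ fun ε hε => hterm ε hε
  rw [h] at hsumint
  have hval : (n : K) * -((n : K) / 2) = algebraMap ℚ K (-(n^2 : ℚ) / 2) := by
    rw [map_div₀, map_neg, map_pow, map_natCast, map_ofNat]
    ring
  rw [show ((2*g+1 : ℕ) : K) = (n : K) by norm_cast] at hsumint
  rw [hval] at hsumint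
  have hq : IsIntegral ℤ ((-(n^2 : ℚ)) / 2) := by
    rwa [isIntegral_algebraMap_iff (algebraMap ℚ K).injective] at hsumint
  obtain ⟨m, hm⟩ := IsIntegrallyClosed.isIntegral_iff.mp hq
  rw [eq_intCast] at hm
  have this1 : (2 : ℚ) * (m : ℚ) = -((n:ℚ)^2) := by
    rw [hm]; ring
  have hmz : 2 * m = -((n:ℤ)^2) := by exact_mod_cast this1
  have hodd : (n : ℤ) = 2 * (g:ℤ) + 1 := by exact_mod_cast hn
  rw [hodd] at hmz
  have key : 2 * m = -(4*((g:ℤ)*(g:ℤ)) + 4*(g:ℤ) + 1) := by rw [hmz]; ring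
  obtain ⟨v, hv⟩ : ∃ v : ℤ, (g:ℤ)*(g:ℤ) = v := ⟨_, rfl⟩
  rw [hv] at key
  omega
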